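/- For two distinct nodes i ≠ j of a finite simple digraph and a uniformly random spanning converging forest φ, the estimator ω̃_ij(φ) = (1/(1+d_j)) · Σ_{k ∈ N⁻(j)} ω̂_ik(φ) is an unbiased estimator of ω_ij, and its variance equals ω_ij/(1+d_j) − ω_ij², which is at most the variance ω_ij − ω_ij² of the indicator estimator ω̂_ij. -/

import Mathlib

open Finset

/-- A spanning converging forest of the digraph with edge relation `E`,
encoded by its successor map `f : V → Option V` (`f i = some j` means edge `(i,j)`
is in the forest, `f i = none` means `i` is a root).  Acyclicity is expressed by a
height function that strictly decreases along edges. -/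
def IsSCF {V : Type*} (E : V → V → Prop) (f : V → Option V) : Prop :=
  (∀ i j, f i = some j → E i j) ∧ ∃ h : V → ℕ, ∀ i j, f i = some j → h j < h i

open scoped Classical in
/-- The set `F` of all spanning converging forests of the digraph `E`. -/
noncomputable def forests {V : Type*} [Fintype V] [DecidableEq V]
    (E : V → V → Prop) : Finset (V → Option V) :=
  Finset.univ.filter (IsSCF E)

/-- The root `r_φ(i)` of the tree containing node `i` in the forest `f`:
follow successors until reaching a root. -/
def rootOf {V : Type*} [Fintype V] (f : V → Option V) (i : V) : V :=
  (fun x => (f x).getD x)^[Fintype.card V] i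

/-- The combinatorial forest-matrix entry `ω_{ij} = |F_{ij}| / |F|`. -/
noncomputable def fOmega {V : Type*} [Fintype V] [DecidableEq V]
    (E : V → V → Prop) (i j : V) : ℝ :=
  (((forests E).filter (fun f => rootOf f i = j)).card : ℝ) / ((forests E).card : ℝ)

/-- Expectation of `g` under a uniformly random spanning converging forest. -/
noncomputable def expVal {V : Type*} [Fintype V] [DecidableEq V]
    (E : V → V → Prop) (g : (V → Option V) → ℝ) : ℝ :=
  (∑ f ∈ forests E, g f) / ((forests E).card : ℝ)

/-- Variance of `g` under a uniformly random spanning converging forest. -/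
noncomputable def varVal {V : Type*} [Fintype V] [DecidableEq V]
    (E : V → V → Prop) (g : (V → Option V) → ℝ) : ℝ :=
  expVal E (fun f => (g f - expVal E g) ^ 2)

/-- The indicator estimator `ω̂_{ij}(φ) = 1_{r_φ(i) = j}`. -/
noncomputable def indEst {V : Type*} [Fintype V] [DecidableEq V]
    (i j : V) (f : V → Option V) : ℝ :=
  if rootOf f i = j then 1 else 0

/-- Out-degree `d_i` of node `i`. -/
def outDeg {V : Type*} [Fintype V] (E : V → V → Prop) [DecidableRel E] (i : V) : ℕ :=
  (Finset.univ.filter (fun j => E i j)).card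

/-- In-neighbors `N⁻(j)` of node `j`. -/
def inNbrs {V : Type*} [Fintype V] (E : V → V → Prop) [DecidableRel E] (j : V) : Finset V :=
  Finset.univ.filter (fun k => E k j)

/-- The out-degree Laplacian `L = D - A`. -/
noncomputable def lap {V : Type*} [Fintype V] [DecidableEq V]
    (E : V → V → Prop) [DecidableRel E] : Matrix V V ℝ :=
  Matrix.of fun i j => (if i = j then (outDeg E i : ℝ) else 0) - (if E i j then (1 : ℝ) else 0)

/-- The forest matrix `Ω = (I + L)⁻¹`. -/
noncomputable def forestMatrix {V : Type*} [Fintype V] [DecidableEq V]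
    (E : V → V → Prop) [DecidableRel E] : Matrix V V ℝ :=
  (1 + lap E)⁻¹



section Aux
variable {V : Type*}

/-- Reachability along the successor map. -/
def Steps (f : V → Option V) : V → V → Prop :=
  Relation.ReflTransGen (fun a b => f a = some b)

lemma steps_none {f : V → Option V} {r b : V} (hr : f r = none) (h : Steps f r b) : b = r := by
  rcases h.cases_head with rfl | ⟨c, hc, _⟩
  · rfl
  · rw [hr] at hc; cases hc

lemma steps_comp {f : V → Option V} {a b c : V} (hab : Steps f a b) (hac : Steps f a c) :
    Steps f b c ∨ Steps f c b := by
  induction hab using Relation.ReflTransGen.head_induction_on with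
  | refl => exact .inl hac
  | head h' _ ih =>
    rcases hac.cases_head with rfl | ⟨d, hd, hdc⟩
    · exact .inr (Relation.ReflTransGen.head h' ‹_›)
    · rw [h'] at hd
      cases hd
      exact ih hdc

lemma steps_transfer {f g : V → Option V} {P : V → Prop}
    (h : ∀ a b, f a = some b → ¬ P a → g a = some b) {v w : V} (hvw : Steps f v w) :
    Steps g v w ∨ ∃ u, P u ∧ Steps g v u ∧ Steps f v u ∧ Steps f u w := by
  induction hvw using Relation.ReflTransGen.head_induction_on with
  | refl => exact .inl .refl
  | @head a c h' hcw ih =>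
    by_cases hPa : P a
    · exact .inr ⟨a, hPa, .refl, .refl, Relation.ReflTransGen.head h' hcw⟩
    · rcases ih with h1 | ⟨u, hu, h1, h2, h3⟩
      · exact .inl (Relation.ReflTransGen.head (h _ _ h' hPa) h1)
      · exact .inr ⟨u, hu, Relation.ReflTransGen.head (h _ _ h' hPa) h1,
          Relation.ReflTransGen.head h' h2, h3⟩

lemma steps_le {f : V → Option V} {h : V → ℕ} (hh : ∀ a b, f a = some b → h b < h a)
    {a b : V} (hab : Steps f a b) : h b ≤ h a := by
  induction hab using Relation.ReflTransGen.head_induction_on with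
  | refl => exact le_rfl
  | head h' _ ih => exact ih.trans (hh _ _ h').le

lemma steps_antisymm {f : V → Option V} (hh : ∃ h : V → ℕ, ∀ a b, f a = some b → h b < h a)
    {a b : V} (hab : Steps f a b) (hba : Steps f b a) : a = b := by
  obtain ⟨h, hh⟩ := hh
  rcases hab.cases_head with rfl | ⟨c, hc, hcb⟩
  · rfl
  · have h1 : h b < h a := lt_of_le_of_lt (steps_le hh hcb) (hh _ _ hc)
    have h2 : h a ≤ h b := steps_le hh hba
    omega

/-- Every vertex reaches a root. -/
def Forestish (f : V → Option V) : Prop := ∀ v, ∃ r, Steps f v r ∧ f r = none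

lemma steps_iterate {f : V → Option V} {a b : V} (h : Steps f a b) :
    ∃ m, (fun x => (f x).getD x)^[m] a = b := by
  induction h using Relation.ReflTransGen.head_induction_on with
  | refl => exact ⟨0, rfl⟩
  | @head a c h' _ ih =>
    obtain ⟨m, hm⟩ := ih
    refine ⟨m + 1, ?_⟩
    rw [Function.iterate_succ_apply]
    simpa [h'] using hm

lemma iterate_steps (f : V → Option V) (m : ℕ) (v : V) :
    Steps f v ((fun x => (f x).getD x)^[m] v) := by
  induction m with
  | zero => exact .refl
  | succ m ih =>
    rw [Function.iterate_succ_apply']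
    rcases hf : f ((fun x => (f x).getD x)^[m] v) with _ | w
    · simpa [hf] using ih
    · exact ih.tail (by simpa [hf])

lemma forestish_height {f : V → Option V} (hf : Forestish f) :
    ∃ h : V → ℕ, ∀ a b, f a = some b → h b < h a := by
  classical
  have hP : ∀ v, ∃ m, f ((fun x => (f x).getD x)^[m] v) = none := by
    intro v
    obtain ⟨r, hr, hrn⟩ := hf v
    obtain ⟨m, hm⟩ := steps_iterate hr
    exact ⟨m, by rw [hm]; exact hrn⟩
  refine ⟨fun v => Nat.find (hP v), fun a b hab => ?_⟩
  show Nat.find (hP b) < Nat.find (hP a)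
  have h0 : ¬ (f ((fun x => (f x).getD x)^[0] a) = none) := by simp [hab]
  have h1 : 1 ≤ Nat.find (hP a) := by
    rcases Nat.eq_zero_or_pos (Nat.find (hP a)) with h | h
    · exact absurd (h ▸ Nat.find_spec (hP a)) h0
    · exact h
  have h2 : f ((fun x => (f x).getD x)^[Nat.find (hP a) - 1] b) = none := by
    have := Nat.find_spec (hP a)
    rwa [show Nat.find (hP a) = (Nat.find (hP a) - 1) + 1 by omega,
      Function.iterate_succ_apply, show (f a).getD a = b by simp [hab]] at this
  have := Nat.find_le (h := hP b) h2
  omega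

lemma height_forestish {f : V → Option V} (hh : ∃ h : V → ℕ, ∀ a b, f a = some b → h b < h a) :
    Forestish f := by
  obtain ⟨h, hh⟩ := hh
  suffices H : ∀ n v, h v = n → ∃ r, Steps f v r ∧ f r = none by
    exact fun v => H (h v) v rfl
  intro n
  induction n using Nat.strong_induction_on with
  | _ n ih =>
    intro v hn
    rcases hfv : f v with _ | w
    · exact ⟨v, .refl, hfv⟩
    · obtain ⟨r, hr, hrn⟩ := ih (h w) (hn ▸ hh _ _ hfv) w rfl
      exact ⟨r, Relation.ReflTransGen.head hfv hr, hrn⟩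

lemma isSCF_iff {E : V → V → Prop} {f : V → Option V} :
    IsSCF E f ↔ (∀ a b, f a = some b → E a b) ∧ Forestish f := by
  constructor
  · rintro ⟨h1, h2⟩
    exact ⟨h1, height_forestish h2⟩
  · rintro ⟨h1, h2⟩
    exact ⟨h1, forestish_height h2⟩

lemma rootOf_spec [Fintype V] {f : V → Option V} (hf : Forestish f) (v : V) :
    Steps f v (rootOf f v) ∧ f (rootOf f v) = none := by
  classical
  set s : V → V := fun x => (f x).getD x with hs
  have hP : ∃ m, f (s^[m] v) = none := by
    obtain ⟨r, hr, hrn⟩ := hf v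
    obtain ⟨m, hm⟩ := steps_iterate hr
    exact ⟨m, by rw [hm]; exact hrn⟩
  set m₀ := Nat.find hP with hm₀
  have hspec : f (s^[m₀] v) = none := Nat.find_spec hP
  have key : ∀ a b : ℕ, a < b → b ≤ m₀ → s^[a] v = s^[b] v → False := by
    intro a b hab hbm heq
    have h1 : s^[m₀] v = s^[m₀ - (b - a)] v := by
      have h2 : s^[m₀] v = s^[m₀ - b] (s^[b] v) := by
        rw [← Function.iterate_add_apply]; congr 1; omega
      rw [← heq, ← Function.iterate_add_apply] at h2
      rw [h2]; congr 1; omega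
    have h3 : f (s^[m₀ - (b - a)] v) = none := h1 ▸ hspec
    have := Nat.find_le (h := hP) h3
    omega
  have hinj : Function.Injective (fun t : Fin (m₀ + 1) => s^[(t : ℕ)] v) := by
    intro a b hab
    simp only at hab
    by_contra hne
    rcases lt_trichotomy (a : ℕ) (b : ℕ) with h | h | h
    · exact key _ _ h (by omega) hab
    · exact hne (Fin.ext h)
    · exact key _ _ h (by omega) hab.symm
  have hcard : m₀ + 1 ≤ Fintype.card V := by
    simpa using Fintype.card_le_of_injective _ hinj
  have habs : s (s^[m₀] v) = s^[m₀] v := by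
    show (f (s^[m₀] v)).getD (s^[m₀] v) = s^[m₀] v; rw [hspec]; rfl
  have hit : s^[Fintype.card V] v = s^[m₀] v := by
    rw [show Fintype.card V = (Fintype.card V - m₀) + m₀ by omega,
      Function.iterate_add_apply, Function.iterate_fixed habs]
  have hro : rootOf f v = s^[m₀] v := hit
  rw [hro]
  exact ⟨iterate_steps f m₀ v, hspec⟩

lemma rootOf_eq [Fintype V] {f : V → Option V} (hf : Forestish f) {v r : V}
    (h1 : Steps f v r) (h2 : f r = none) : rootOf f v = r := by
  obtain ⟨hsp, hn⟩ := rootOf_spec hf v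
  rcases steps_comp hsp h1 with h | h
  · exact (steps_none hn h).symm
  · exact steps_none h2 h

lemma mem_forests_iff {V : Type*} [Fintype V] [DecidableEq V] {E : V → V → Prop}
    {f : V → Option V} :
    f ∈ forests E ↔ (∀ a b, f a = some b → E a b) ∧ Forestish f := by
  classical
  simp [forests, isSCF_iff]

lemma steps_pred {f : V → Option V} {a b : V} (h : Steps f a b) (hne : a ≠ b) :
    ∃ p, Steps f a p ∧ f p = some b := by
  rcases h.cases_tail with h' | ⟨c, hc, hcb⟩
  · exact absurd h'.symm hne
  · exact ⟨c, hc, hcb⟩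

end Aux

lemma key_count {V : Type*} [Fintype V] [DecidableEq V] (E : V → V → Prop) [DecidableRel E]
    (hE : ∀ v, ¬ E v v) (i j : V) (hij : i ≠ j) :
    ∑ k ∈ inNbrs E j, ((forests E).filter (fun f => rootOf f i = k)).card
      = ((forests E).filter (fun f => rootOf f i = j)).card * (1 + outDeg E j) := by
  classical
  set X : Finset (Option V) := insert none ((univ.filter (fun l => E j l)).image some) with hX
  have hXcard : X.card = 1 + outDeg E j := by
    rw [hX, card_insert_of_notMem (by simp),
      card_image_of_injective _ (Option.some_injective V)]
    simp [outDeg, Nat.add_comm]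
  rw [← Finset.card_sigma, ← hXcard, ← Finset.card_product]
  refine Finset.card_bij
    (fun p _ => (Function.update (Function.update p.2 p.1 (some j)) j none, p.2 j)) ?_ ?_ ?_
  · -- maps to
    rintro ⟨k, f⟩ hp
    dsimp only
    rw [Finset.mem_sigma] at hp
    obtain ⟨hk, hf⟩ := hp
    dsimp only at hk hf
    have hkj : E k j := by simpa [inNbrs] using hk
    have hknej : k ≠ j := fun h => hE j (h ▸ hkj)
    rw [Finset.mem_filter] at hf
    obtain ⟨hfF, hroot⟩ := hf
    rw [mem_forests_iff] at hfF
    obtain ⟨hedge, hfor⟩ := hfF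
    obtain ⟨hik, hfk⟩ := rootOf_spec hfor i
    rw [hroot] at hik hfk
    set φ := Function.update (Function.update f k (some j)) j none with hφdef
    have hφj : φ j = none := Function.update_self _ _ _
    have hφk : φ k = some j := by
      rw [hφdef, Function.update_of_ne hknej, Function.update_self]
    have hφa : ∀ a, a ≠ j → a ≠ k → φ a = f a := fun a h1 h2 => by
      rw [hφdef, Function.update_of_ne h1, Function.update_of_ne h2]
    have htr : ∀ a b, f a = some b → ¬(a = j) → φ a = some b := by
      intro a b hab haj
      have hak : a ≠ k := fun h => by rw [h, hfk] at hab; cases hab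
      rw [hφa a haj hak]; exact hab
    have hforφ : Forestish φ := by
      intro v
      obtain ⟨r, hr, hrn⟩ := hfor v
      rcases steps_transfer htr hr with h1 | ⟨u, hueq, h1, _, _⟩
      · by_cases hrj : r = j
        · exact ⟨j, hrj ▸ h1, hφj⟩
        · by_cases hrk : r = k
          · exact ⟨j, (hrk ▸ h1).tail hφk, hφj⟩
          · exact ⟨r, h1, (hφa r hrj hrk).trans hrn⟩
      · subst u
        exact ⟨j, h1, hφj⟩
    have hrootφ : rootOf φ i = j := by
      rcases steps_transfer htr hik with h1 | ⟨u, hueq, h1, _, _⟩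
      · exact rootOf_eq hforφ (h1.tail hφk) hφj
      · subst u
        exact rootOf_eq hforφ h1 hφj
    have hedgeφ : ∀ a b, φ a = some b → E a b := by
      intro a b hab
      by_cases haj : a = j
      · rw [haj, hφj] at hab; cases hab
      · by_cases hak : a = k
        · subst hak
          rw [hφk] at hab
          injection hab with hb
          subst hb
          exact hkj
        · exact hedge a b ((hφa a haj hak) ▸ hab)
    rw [Finset.mem_product]
    constructor
    · exact Finset.mem_filter.2 ⟨mem_forests_iff.2 ⟨hedgeφ, hforφ⟩, hrootφ⟩
    · rcases hfj : f j with _ | l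
      · show none ∈ X
        exact mem_insert_self _ _
      · show some l ∈ X
        exact mem_insert_of_mem (mem_image_of_mem some (by simp [hedge _ _ hfj]))
  · -- injective
    rintro ⟨k1, f1⟩ hp1 ⟨k2, f2⟩ hp2 heq
    rw [Finset.mem_sigma] at hp1 hp2
    obtain ⟨hk1, hf1⟩ := hp1
    obtain ⟨hk2, hf2⟩ := hp2
    dsimp only at hk1 hf1 hk2 hf2
    have hk1j : E k1 j := by simpa [inNbrs] using hk1
    have hk2j : E k2 j := by simpa [inNbrs] using hk2
    have hk1nej : k1 ≠ j := fun h => hE j (h ▸ hk1j)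
    have hk2nej : k2 ≠ j := fun h => hE j (h ▸ hk2j)
    rw [Finset.mem_filter, mem_forests_iff] at hf1 hf2
    obtain ⟨⟨hedge1, hfor1⟩, hroot1⟩ := hf1
    obtain ⟨⟨hedge2, hfor2⟩, hroot2⟩ := hf2
    obtain ⟨hi1, hf1k1⟩ := rootOf_spec hfor1 i
    rw [hroot1] at hi1 hf1k1
    obtain ⟨hi2, hf2k2⟩ := rootOf_spec hfor2 i
    rw [hroot2] at hi2 hf2k2
    simp only [Prod.mk.injEq] at heq
    obtain ⟨hφeq, hjeq⟩ := heq
    have hh1 := forestish_height hfor1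
    have hh2 := forestish_height hfor2
    -- values away from the modified points agree
    have hsame : ∀ a, a ≠ k1 → a ≠ k2 → f1 a = f2 a := by
      intro a h1 h2
      by_cases haj : a = j
      · rw [haj]; exact hjeq
      · have := congrFun hφeq a
        rwa [Function.update_of_ne haj, Function.update_of_ne haj,
          Function.update_of_ne h1, Function.update_of_ne h2] at this
    suffices hkk : k1 = k2 by
      subst hkk
      have hfeq : f1 = f2 := by
        funext a
        by_cases h1 : a = k1
        · rw [h1, hf1k1, hf2k2]
        · exact hsame a h1 h1
      rw [hfeq]
    by_contra hkk
    have hf1k2 : f1 k2 = some j := by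
      have := congrFun hφeq k2
      rwa [Function.update_of_ne hk2nej, Function.update_of_ne hk2nej,
        Function.update_of_ne (Ne.symm hkk), Function.update_self] at this
    have hf2k1 : f2 k1 = some j := by
      have := congrFun hφeq k1
      rw [Function.update_of_ne hk1nej, Function.update_of_ne hk1nej,
        Function.update_self, Function.update_of_ne hkk] at this
      exact this.symm
    have htr12 : ∀ a b, f1 a = some b → ¬(a = k2) → f2 a = some b := by
      intro a b hab h2
      have h1 : a ≠ k1 := fun h => by rw [h, hf1k1] at hab; cases hab
      rw [← hsame a h1 h2]; exact hab
    have htr21 : ∀ a b, f2 a = some b → ¬(a = k1) → f1 a = some b := by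
      intro a b hab h1
      have h2 : a ≠ k2 := fun h => by rw [h, hf2k2] at hab; cases hab
      rw [hsame a h1 h2]; exact hab
    rcases steps_transfer htr12 hi1 with hA | ⟨u, hueq, _, _, hB3⟩
    · -- i reaches k1 also in f2
      rcases steps_comp hA hi2 with h | h
      · rcases h.cases_head with heqq | ⟨c, hc, hcq⟩
        · exact hkk heqq
        · rw [hf2k1] at hc
          cases hc
          -- hcq : Steps f2 j k2
          rcases steps_transfer htr21 hcq with h1 | ⟨u, hueq, _, h2, _⟩
          · exact absurd (steps_antisymm hh1 (Relation.ReflTransGen.single hf1k2) h1) hk2nej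
          · subst u
            exact absurd (steps_antisymm hh2 (Relation.ReflTransGen.single hf2k1) h2) hk1nej
      · exact hkk (steps_none hf2k2 h)
    · subst u
      -- hB3 : Steps f1 k2 k1
      rcases hB3.cases_head with heqq | ⟨c, hc, hcq⟩
      · exact hkk heqq.symm
      · rw [hf1k2] at hc
        cases hc
        -- hcq : Steps f1 j k1
        rcases steps_transfer htr12 hcq with h1 | ⟨u, hueq, _, h2, _⟩
        · exact absurd (steps_antisymm hh2 (Relation.ReflTransGen.single hf2k1) h1) hk1nej
        · subst u
          exact absurd (steps_antisymm hh1 (Relation.ReflTransGen.single hf1k2) h2) hk2nej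
  · -- surjective
    rintro ⟨φ, x⟩ hb
    rw [Finset.mem_product, Finset.mem_filter, mem_forests_iff] at hb
    obtain ⟨⟨⟨hedgeφ, hforφ⟩, hrootφ⟩, hx⟩ := hb
    dsimp only at hedgeφ hforφ hrootφ hx
    obtain ⟨hstij, hφj⟩ := rootOf_spec hforφ i
    rw [hrootφ] at hstij hφj
    obtain ⟨k₀, hik₀, hk₀j⟩ := steps_pred hstij hij
    have hEk₀j : E k₀ j := hedgeφ _ _ hk₀j
    have hk₀nej : k₀ ≠ j := fun h => hE j (h ▸ hEk₀j)
    set φ' := Function.update φ k₀ none with hφ'def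
    have hφ'k₀ : φ' k₀ = none := Function.update_self _ _ _
    have hφ'a : ∀ a, a ≠ k₀ → φ' a = φ a := fun a h => Function.update_of_ne h _ _
    have hφ'j : φ' j = none := (hφ'a j (Ne.symm hk₀nej)).trans hφj
    have htr' : ∀ a b, φ a = some b → ¬(a = k₀) → φ' a = some b := by
      intro a b hab h; rw [hφ'a a h]; exact hab
    have hforφ' : Forestish φ' := by
      intro v
      obtain ⟨r, hr, hrn⟩ := hforφ v
      rcases steps_transfer htr' hr with h1 | ⟨u, hueq, h1, _, _⟩
      · by_cases hrk : r = k₀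
        · exact ⟨k₀, hrk ▸ h1, hφ'k₀⟩
        · exact ⟨r, h1, (hφ'a r hrk).trans hrn⟩
      · subst u
        exact ⟨k₀, h1, hφ'k₀⟩
    have hedgeφ' : ∀ a b, φ' a = some b → E a b := by
      intro a b hab
      by_cases hak : a = k₀
      · rw [hak, hφ'k₀] at hab; cases hab
      · exact hedgeφ a b ((hφ'a a hak) ▸ hab)
    have hst' : Steps φ' i k₀ := by
      rcases steps_transfer htr' hik₀ with h1 | ⟨u, hueq, h1, _, _⟩
      · exact h1
      · subst u
        exact h1
    have hroot' : rootOf φ' i = k₀ := rootOf_eq hforφ' hst' hφ'k₀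
    have hk₀in : k₀ ∈ inNbrs E j := by simp [inNbrs, hEk₀j]
    simp only [hX, mem_insert, Finset.mem_image, Finset.mem_filter] at hx
    rcases hx with rfl | ⟨l, hl, rfl⟩
    · -- x = none
      refine ⟨⟨k₀, φ'⟩, Finset.mem_sigma.2 ⟨hk₀in,
        Finset.mem_filter.2 ⟨mem_forests_iff.2 ⟨hedgeφ', hforφ'⟩, hroot'⟩⟩, ?_⟩
      have hfst : Function.update (Function.update φ' k₀ (some j)) j none = φ := by
        funext a
        by_cases haj : a = j
        · rw [haj, Function.update_self, hφj]
        · rw [Function.update_of_ne haj]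
          by_cases hak : a = k₀
          · rw [hak, Function.update_self, hk₀j]
          · rw [Function.update_of_ne hak, hφ'a a hak]
      exact Prod.ext hfst hφ'j
    · -- x = some l with E j l
      have hjl : E j l := hl.2
      have hlnej : l ≠ j := fun h => hE j (h ▸ hjl)
      by_cases hcase : rootOf φ' l = j
      · -- case (b)
        have hstl : Steps φ' l j := by
          have := (rootOf_spec hforφ' l).1
          rwa [hcase] at this
        obtain ⟨k', hlk', hk'j⟩ := steps_pred hstl hlnej
        have hEk'j : E k' j := hedgeφ' _ _ hk'j
        have hk'nej : k' ≠ j := fun h => hE j (h ▸ hEk'j)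
        have hk'nek₀ : k' ≠ k₀ := fun h => by rw [h, hφ'k₀] at hk'j; cases hk'j
        set ψ := Function.update (Function.update φ k' none) j (some l) with hψdef
        have hψj : ψ j = some l := Function.update_self _ _ _
        have hψk' : ψ k' = none := by
          rw [hψdef, Function.update_of_ne hk'nej, Function.update_self]
        have hψa : ∀ a, a ≠ k' → a ≠ j → ψ a = φ a := fun a h1 h2 => by
          rw [hψdef, Function.update_of_ne h2, Function.update_of_ne h1]
        have hψk₀ : ψ k₀ = some j := by
          rw [hψa k₀ (Ne.symm hk'nek₀) hk₀nej, hk₀j]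
        have htrψ : ∀ a b, φ' a = some b → ¬(a = k₀ ∨ a = k' ∨ a = j) → ψ a = some b := by
          intro a b hab h
          push_neg at h
          rw [hψa a h.2.1 h.2.2, ← hφ'a a h.1]; exact hab
        have htl : Steps ψ l k' := by
          rcases steps_transfer htrψ hlk' with h1 | ⟨u, hu, h1, _, h3⟩
          · exact h1
          · rcases hu with hu | hu | hu
            · subst u
              exact absurd (steps_none hφ'k₀ h3) hk'nek₀
            · subst u
              exact h1
            · subst u
              exact absurd (steps_none hφ'j h3) hk'nej
        have hjk' : Steps ψ j k' := Relation.ReflTransGen.head hψj htl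
        have hk₀k' : Steps ψ k₀ k' := Relation.ReflTransGen.head hψk₀ hjk'
        have hforψ : Forestish ψ := by
          intro v
          obtain ⟨r, hr, hrn⟩ := hforφ' v
          rcases steps_transfer htrψ hr with h1 | ⟨u, hu, h1, _, _⟩
          · by_cases hrk₀ : r = k₀
            · exact ⟨k', (hrk₀ ▸ h1).trans hk₀k', hψk'⟩
            · by_cases hrj : r = j
              · exact ⟨k', (hrj ▸ h1).trans hjk', hψk'⟩
              · by_cases hrk' : r = k'
                · exact ⟨k', hrk' ▸ h1, hψk'⟩
                · exact ⟨r, h1, (hψa r hrk' hrj).trans ((hφ'a r hrk₀).symm.trans hrn)⟩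
          · rcases hu with hu | hu | hu
            · subst u
              exact ⟨k', h1.trans hk₀k', hψk'⟩
            · subst u
              exact ⟨k', h1, hψk'⟩
            · subst u
              exact ⟨k', h1.trans hjk', hψk'⟩
        have hedgeψ : ∀ a b, ψ a = some b → E a b := by
          intro a b hab
          by_cases haj : a = j
          · subst haj
            rw [hψj] at hab
            injection hab with hb
            subst hb
            exact hjl
          · by_cases hak' : a = k'
            · rw [hak', hψk'] at hab; cases hab
            · exact hedgeφ a b ((hψa a hak' haj) ▸ hab)
        have hrootψ : rootOf ψ i = k' := by
          refine rootOf_eq hforψ ?_ hψk'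
          rcases steps_transfer htrψ hst' with h1 | ⟨u, hu, h1, _, h3⟩
          · exact h1.trans hk₀k'
          · rcases hu with hu | hu | hu
            · subst u
              exact h1.trans hk₀k'
            · subst u
              rcases h3.cases_head with heqq | ⟨c, hc, hcq⟩
              · exact absurd heqq hk'nek₀
              · have hcj : c = j := (Option.some.inj ((hk'j.symm).trans hc)).symm
                exact absurd (steps_none hφ'j (hcj ▸ hcq)) hk₀nej
            · subst u
              exact absurd (steps_none hφ'j h3) hk₀nej
        refine ⟨⟨k', ψ⟩, Finset.mem_sigma.2 ⟨by simp [inNbrs, hEk'j],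
          Finset.mem_filter.2 ⟨mem_forests_iff.2 ⟨hedgeψ, hforψ⟩, hrootψ⟩⟩, ?_⟩
        have hfst : Function.update (Function.update ψ k' (some j)) j none = φ := by
          funext a
          by_cases haj : a = j
          · rw [haj, Function.update_self, hφj]
          · rw [Function.update_of_ne haj]
            by_cases hak' : a = k'
            · rw [hak', Function.update_self, ← hφ'a k' hk'nek₀, hk'j]
            · rw [Function.update_of_ne hak', hψa a hak' haj]
        exact Prod.ext hfst hψj
      · -- case (a)
        set ψ := Function.update φ' j (some l) with hψdef
        have hψj : ψ j = some l := Function.update_self _ _ _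
        have hψa : ∀ a, a ≠ j → ψ a = φ' a := fun a h => Function.update_of_ne h _ _
        have htrψ : ∀ a b, φ' a = some b → ¬(a = j) → ψ a = some b := by
          intro a b hab h; rw [hψa a h]; exact hab
        obtain ⟨hsl, hrl⟩ := rootOf_spec hforφ' l
        set rl := rootOf φ' l
        have hrlnej : rl ≠ j := hcase
        have hstψl : Steps ψ l rl := by
          rcases steps_transfer htrψ hsl with h1 | ⟨u, hueq, h1, _, h3⟩
          · exact h1
          · subst u
            exact absurd (steps_none hφ'j h3).symm (Ne.symm hrlnej)
        have hψrl : ψ rl = none := (hψa rl hrlnej).trans hrl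
        have hforψ : Forestish ψ := by
          intro v
          obtain ⟨r, hr, hrn⟩ := hforφ' v
          rcases steps_transfer htrψ hr with h1 | ⟨u, hueq, h1, _, _⟩
          · by_cases hrj : r = j
            · exact ⟨rl, ((hrj ▸ h1).tail hψj).trans hstψl, hψrl⟩
            · exact ⟨r, h1, (hψa r hrj).trans hrn⟩
          · subst u
            exact ⟨rl, (h1.tail hψj).trans hstψl, hψrl⟩
        have hedgeψ : ∀ a b, ψ a = some b → E a b := by
          intro a b hab
          by_cases haj : a = j
          · subst haj
            rw [hψj] at hab
            injection hab with hb
            subst hb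
            exact hjl
          · exact hedgeφ' a b ((hψa a haj) ▸ hab)
        have hψk₀ : ψ k₀ = none := (hψa k₀ hk₀nej).trans hφ'k₀
        have hrootψ : rootOf ψ i = k₀ := by
          refine rootOf_eq hforψ ?_ hψk₀
          rcases steps_transfer htrψ hst' with h1 | ⟨u, hueq, h1, _, h3⟩
          · exact h1
          · subst u
            exact absurd (steps_none hφ'j h3) hk₀nej
        refine ⟨⟨k₀, ψ⟩, Finset.mem_sigma.2 ⟨hk₀in,
          Finset.mem_filter.2 ⟨mem_forests_iff.2 ⟨hedgeψ, hforψ⟩, hrootψ⟩⟩, ?_⟩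
        have hfst : Function.update (Function.update ψ k₀ (some j)) j none = φ := by
          funext a
          by_cases haj : a = j
          · rw [haj, Function.update_self, hφj]
          · rw [Function.update_of_ne haj]
            by_cases hak : a = k₀
            · rw [hak, Function.update_self, hk₀j]
            · rw [Function.update_of_ne hak, hψa a haj, hφ'a a hak]
        exact Prod.ext hfst hψj

lemma forests_nonempty {V : Type*} [Fintype V] [DecidableEq V] (E : V → V → Prop) :
    (0 : ℝ) < ((forests E).card : ℝ) := by
  classical
  have hmem : (fun _ : V => (none : Option V)) ∈ forests E := by
    rw [mem_forests_iff]
    exact ⟨fun a b h => (by cases h), fun v => ⟨v, .refl, rfl⟩⟩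
  exact_mod_cast Finset.card_pos.2 ⟨_, hmem⟩

theorem tildeEst_unbiased_variance_reduced' {V : Type*} [Fintype V] [DecidableEq V]
    (E : V → V → Prop) [DecidableRel E] (hE : ∀ i, ¬ E i i)
    (i j : V) (hij : i ≠ j) :
    expVal E (fun f => (1 / (1 + (outDeg E j : ℝ))) * ∑ k ∈ inNbrs E j, indEst i k f)
      = fOmega E i j ∧
    varVal E (fun f => (1 / (1 + (outDeg E j : ℝ))) * ∑ k ∈ inNbrs E j, indEst i k f)
      = fOmega E i j / (1 + (outDeg E j : ℝ)) - (fOmega E i j) ^ 2 ∧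
    varVal E (fun f => (1 / (1 + (outDeg E j : ℝ))) * ∑ k ∈ inNbrs E j, indEst i k f)
      ≤ fOmega E i j - (fOmega E i j) ^ 2 := by
  classical
  have hd0 : (0 : ℝ) ≤ (outDeg E j : ℝ) := Nat.cast_nonneg _
  have hD : (0 : ℝ) < 1 + (outDeg E j : ℝ) := by linarith
  have hDne : (1 : ℝ) + (outDeg E j : ℝ) ≠ 0 := ne_of_gt hD
  have hN0 : (0 : ℝ) < ((forests E).card : ℝ) := forests_nonempty E
  have hNne : ((forests E).card : ℝ) ≠ 0 := ne_of_gt hN0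
  have hω0 : 0 ≤ fOmega E i j := by
    rw [fOmega]; positivity
  -- sum over forests of the indicator
  have hsum : ∀ k : V, (∑ f ∈ forests E, indEst i k f)
      = (((forests E).filter (fun f => rootOf f i = k)).card : ℝ) := by
    intro k
    simpa [indEst] using Finset.sum_boole (fun f => rootOf f i = k) (forests E)
  have key := key_count E hE i j hij
  have keyR : (∑ k ∈ inNbrs E j, (((forests E).filter (fun f => rootOf f i = k)).card : ℝ))
      = (((forests E).filter (fun f => rootOf f i = j)).card : ℝ)
        * (1 + (outDeg E j : ℝ)) := by
    have := congrArg (Nat.cast : ℕ → ℝ) key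
    push_cast at this
    exact this
  -- total sum of the estimator numerator
  have hS1 : (∑ f ∈ forests E, ∑ k ∈ inNbrs E j, indEst i k f)
      = (((forests E).filter (fun f => rootOf f i = j)).card : ℝ)
        * (1 + (outDeg E j : ℝ)) := by
    rw [Finset.sum_comm]
    rw [Finset.sum_congr rfl (fun k _ => hsum k)]
    exact keyR
  -- pointwise: the inner sum is an indicator
  have ht : ∀ f, (∑ k ∈ inNbrs E j, indEst i k f)
      = if rootOf f i ∈ inNbrs E j then (1 : ℝ) else 0 := by
    intro f
    simpa [indEst] using Finset.sum_ite_eq (inNbrs E j) (rootOf f i) (fun _ => (1 : ℝ))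
  have hsq : ∀ f, ((∑ k ∈ inNbrs E j, indEst i k f)) ^ 2
      = (∑ k ∈ inNbrs E j, indEst i k f) := by
    intro f; rw [ht f]; split_ifs <;> norm_num
  have hS2 : (∑ f ∈ forests E, ((∑ k ∈ inNbrs E j, indEst i k f)) ^ 2)
      = (((forests E).filter (fun f => rootOf f i = j)).card : ℝ)
        * (1 + (outDeg E j : ℝ)) := by
    rw [Finset.sum_congr rfl (fun f _ => hsq f)]
    exact hS1
  have hωdef : fOmega E i j
      = (((forests E).filter (fun f => rootOf f i = j)).card : ℝ) / ((forests E).card : ℝ) :=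
    rfl
  have h1 : expVal E (fun f => (1 / (1 + (outDeg E j : ℝ))) * ∑ k ∈ inNbrs E j, indEst i k f)
      = fOmega E i j := by
    rw [expVal, ← Finset.mul_sum, hS1, hωdef]
    field_simp
  have h2 : varVal E (fun f => (1 / (1 + (outDeg E j : ℝ))) * ∑ k ∈ inNbrs E j, indEst i k f)
      = fOmega E i j / (1 + (outDeg E j : ℝ)) - (fOmega E i j) ^ 2 := by
    rw [varVal, h1, expVal]
    have hpt : ∀ f ∈ forests E,
        ((1 / (1 + (outDeg E j : ℝ))) * (∑ k ∈ inNbrs E j, indEst i k f) - fOmega E i j) ^ 2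
        = (1 / (1 + (outDeg E j : ℝ))) ^ 2 * ((∑ k ∈ inNbrs E j, indEst i k f)) ^ 2
          - 2 * (1 / (1 + (outDeg E j : ℝ))) * fOmega E i j * (∑ k ∈ inNbrs E j, indEst i k f)
          + (fOmega E i j) ^ 2 := by
      intro f _
      ring
    rw [Finset.sum_congr rfl hpt, Finset.sum_add_distrib, Finset.sum_sub_distrib,
      ← Finset.mul_sum, ← Finset.mul_sum, Finset.sum_const, nsmul_eq_mul, hS1, hS2, hωdef]
    field_simp
    ring
  refine ⟨h1, h2, ?_⟩
  rw [h2]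
  have hle : fOmega E i j / (1 + (outDeg E j : ℝ)) ≤ fOmega E i j :=
    div_le_self hω0 (by linarith)
  linarith

/-- for distinct i ≠ j, the estimator
ω̃_ij(φ) = (1/(1+d_j)) · Σ_{k ∈ N⁻(j)} ω̂_ik(φ) is unbiased for ω_ij, with
variance ω_ij/(1+d_j) − ω_ij², which is at most the variance ω_ij − ω_ij²
of the indicator estimator. -/
theorem tildeEst_unbiased_variance_reduced {V : Type*} [Fintype V] [DecidableEq V]
    (E : V → V → Prop) [DecidableRel E] (hE : ∀ i, ¬ E i i)
    (i j : V) (hij : i ≠ j) :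
    expVal E (fun f => (1 / (1 + (outDeg E j : ℝ))) * ∑ k ∈ inNbrs E j, indEst i k f)
      = fOmega E i j ∧
    varVal E (fun f => (1 / (1 + (outDeg E j : ℝ))) * ∑ k ∈ inNbrs E j, indEst i k f)
      = fOmega E i j / (1 + (outDeg E j : ℝ)) - (fOmega E i j) ^ 2 ∧
    varVal E (fun f => (1 / (1 + (outDeg E j : ℝ))) * ∑ k ∈ inNbrs E j, indEst i k f)
      ≤ fOmega E i j - (fOmega E i j) ^ 2 := by
  exact tildeEst_unbiased_variance_reduced' E hE i j hij
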